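/- Let β ≥ 0 and let δ : ℕ → ℝ be a sequence of nonnegative reals such that δ(2) ≤ 4β/3 and, for every γ ≥ 2, δ(γ+1) ≤ (1 − 2/(γ+1))·δ(γ) + β·(2/(γ+1))². Then δ(γ) ≤ 4β/(γ+1) for every γ ≥ 2. -/
import Mathlib


/-- The recurrence induction in the proof of Theorem 1: if `β ≥ 0`, `δ` is a sequence
of nonnegative reals with `δ(2) ≤ 4β/3` and
`δ(γ+1) ≤ (1 − 2/(γ+1))·δ(γ) + β·(2/(γ+1))²` for all `γ ≥ 2`,
then `δ(γ) ≤ 4β/(γ+1)` for all `γ ≥ 2`. -/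
theorem frank_wolfe_gap_recurrence (β : ℝ) (hβ : 0 ≤ β) (δ : ℕ → ℝ)
    (hδ : ∀ n, 0 ≤ δ n) (h2 : δ 2 ≤ 4 * β / 3)
    (hrec : ∀ γ : ℕ, 2 ≤ γ →
      δ (γ + 1) ≤ (1 - 2 / ((γ : ℝ) + 1)) * δ γ + β * (2 / ((γ : ℝ) + 1)) ^ 2) :
    ∀ γ : ℕ, 2 ≤ γ → δ γ ≤ 4 * β / ((γ : ℝ) + 1) := by
  intro γ hγ
  induction γ with
  | zero => omega
  | succ n ih =>
    rcases Nat.lt_or_ge n 2 with hn | hn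
    · interval_cases n
      · omega
      · norm_num; exact h2
    · have hn1 : (0:ℝ) < (n:ℝ) + 1 := by positivity
      have hn2 : (0:ℝ) < (n:ℝ) + 2 := by positivity
      have ihn := ih hn
      have hstep := hrec n hn
      have hfac : (0:ℝ) ≤ 1 - 2 / ((n:ℝ) + 1) := by
        rw [sub_nonneg, div_le_one hn1]
        have : (2:ℝ) ≤ (n:ℝ) := by exact_mod_cast hn
        linarith
      have key : δ (n+1) ≤ (1 - 2 / ((n:ℝ) + 1)) * (4 * β / ((n:ℝ)+1)) + β * (2 / ((n:ℝ) + 1)) ^ 2 :=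
        hstep.trans (by nlinarith [mul_le_mul_of_nonneg_left ihn hfac])
      have : (1 - 2 / ((n:ℝ) + 1)) * (4 * β / ((n:ℝ)+1)) + β * (2 / ((n:ℝ) + 1)) ^ 2
          ≤ 4 * β / ((n:ℝ) + 2) := by
        have e : (1 - 2 / ((n:ℝ) + 1)) * (4 * β / ((n:ℝ)+1)) + β * (2 / ((n:ℝ) + 1)) ^ 2
            = 4 * β * (n:ℝ) / (((n:ℝ)+1)^2) := by
          field_simp
          ring
        rw [e, div_le_div_iff₀ (by positivity) hn2]
        nlinarith [mul_nonneg hβ (Nat.cast_nonneg n : (0:ℝ) ≤ n)]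
      have e2 : ((n:ℝ) + 1) + 1 = (n:ℝ) + 2 := by ring
      push_cast
      rw [e2]
      linarith
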